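/- Define u, v : ℝⁿ × ℝⁿ → ℝ by u(x,y) = (x·y)/(1 + x·x) and v(x,y) = √((1+x·x)(1+y·y) - (x·y)²)/(1+x·x), and set z = u + iv. Then on the open set where (1+x·x)(1+y·y) - (x·y)² > 0, the function z satisfies the system of PDEs ∂z/∂x^l + z ∂z/∂y^l = 0 for all 1 ≤ l ≤ n. -/

import Mathlib

open scoped BigOperators

set_option maxHeartbeats 1000000 in
/-- With `u(x,y) = (x·y)/(1+x·x)`, `v(x,y) = √((1+x·x)(1+y·y)-(x·y)²)/(1+x·x)` and
`z = u + iv`, the function `z` satisfies `∂z/∂xˡ + z ∂z/∂yˡ = 0` for all `l` on the open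
set where `(1+x·x)(1+y·y)-(x·y)² > 0`. -/
theorem explicit_solution_complex_burgers (n : ℕ)
    (z : (Fin n → ℝ) × (Fin n → ℝ) → ℂ)
    (hz : z = fun p =>
      (((∑ i, p.1 i * p.2 i) / (1 + ∑ i, p.1 i ^ 2) : ℝ) : ℂ)
        + ((Real.sqrt ((1 + ∑ i, p.1 i ^ 2) * (1 + ∑ i, p.2 i ^ 2)
              - (∑ i, p.1 i * p.2 i) ^ 2) / (1 + ∑ i, p.1 i ^ 2) : ℝ) : ℂ) * Complex.I)
    (p : (Fin n → ℝ) × (Fin n → ℝ))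
    (hp : 0 < (1 + ∑ i, p.1 i ^ 2) * (1 + ∑ i, p.2 i ^ 2) - (∑ i, p.1 i * p.2 i) ^ 2)
    (l : Fin n) :
    fderiv ℝ z p (Pi.single l 1, 0) + z p * fderiv ℝ z p (0, Pi.single l 1) = 0 := by
  subst hz
  set LX : Fin n → ((Fin n → ℝ) × (Fin n → ℝ) →L[ℝ] ℝ) := fun i =>
    (ContinuousLinearMap.proj i).comp (ContinuousLinearMap.fst ℝ (Fin n → ℝ) (Fin n → ℝ)) with hLX
  set LY : Fin n → ((Fin n → ℝ) × (Fin n → ℝ) →L[ℝ] ℝ) := fun i =>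
    (ContinuousLinearMap.proj i).comp (ContinuousLinearMap.snd ℝ (Fin n → ℝ) (Fin n → ℝ)) with hLY
  have hxi : ∀ i, HasFDerivAt (fun q : (Fin n → ℝ) × (Fin n → ℝ) => q.1 i) (LX i) p :=
    fun i => (LX i).hasFDerivAt
  have hyi : ∀ i, HasFDerivAt (fun q : (Fin n → ℝ) × (Fin n → ℝ) => q.2 i) (LY i) p :=
    fun i => (LY i).hasFDerivAt
  set A : ℝ := 1 + ∑ i, p.1 i ^ 2 with hAdef
  set B : ℝ := 1 + ∑ i, p.2 i ^ 2 with hBdef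
  set C : ℝ := ∑ i, p.1 i * p.2 i with hCdef
  set D : ℝ := A * B - C ^ 2 with hDdef
  set s : ℝ := Real.sqrt D with hsdef
  have hA0 : (0:ℝ) < A := by positivity
  have hAne : A ≠ 0 := ne_of_gt hA0
  have hDne : D ≠ 0 := ne_of_gt hp
  have hs0 : (0:ℝ) < s := Real.sqrt_pos.mpr hp
  have hs2 : s ^ 2 = D := Real.sq_sqrt hp.le
  set LC : (Fin n → ℝ) × (Fin n → ℝ) →L[ℝ] ℝ := ∑ i, (p.1 i • LY i + p.2 i • LX i) with hLC
  set LA : (Fin n → ℝ) × (Fin n → ℝ) →L[ℝ] ℝ := ∑ i, (p.1 i • LX i + p.1 i • LX i) with hLA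
  set LB : (Fin n → ℝ) × (Fin n → ℝ) →L[ℝ] ℝ := ∑ i, (p.2 i • LY i + p.2 i • LY i) with hLB
  have hC : HasFDerivAt (fun q : (Fin n → ℝ) × (Fin n → ℝ) => ∑ i, q.1 i * q.2 i) LC p :=
    HasFDerivAt.fun_sum fun i _ => (hxi i).fun_mul (hyi i)
  have hA : HasFDerivAt (fun q : (Fin n → ℝ) × (Fin n → ℝ) => 1 + ∑ i, q.1 i ^ 2) LA p := by
    have h := (HasFDerivAt.fun_sum fun i _ => (hxi i).fun_mul (hxi i) :
      HasFDerivAt (fun q : (Fin n → ℝ) × (Fin n → ℝ) => ∑ i, q.1 i * q.1 i) LA p).const_add 1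
    simpa only [← pow_two] using h
  have hB : HasFDerivAt (fun q : (Fin n → ℝ) × (Fin n → ℝ) => 1 + ∑ i, q.2 i ^ 2) LB p := by
    have h := (HasFDerivAt.fun_sum fun i _ => (hyi i).fun_mul (hyi i) :
      HasFDerivAt (fun q : (Fin n → ℝ) × (Fin n → ℝ) => ∑ i, q.2 i * q.2 i) LB p).const_add 1
    simpa only [← pow_two] using h
  have hAinv : HasFDerivAt (fun q : (Fin n → ℝ) × (Fin n → ℝ) => (1 + ∑ i, q.1 i ^ 2)⁻¹)
      ((-(A ^ 2)⁻¹) • LA) p := (hasDerivAt_inv hAne).comp_hasFDerivAt p hA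
  have hu : HasFDerivAt
      (fun q : (Fin n → ℝ) × (Fin n → ℝ) => (∑ i, q.1 i * q.2 i) / (1 + ∑ i, q.1 i ^ 2))
      (C • ((-(A ^ 2)⁻¹) • LA) + A⁻¹ • LC) p := by
    simpa [div_eq_mul_inv] using hC.fun_mul hAinv
  have hD : HasFDerivAt (fun q : (Fin n → ℝ) × (Fin n → ℝ) =>
      (1 + ∑ i, q.1 i ^ 2) * (1 + ∑ i, q.2 i ^ 2) - (∑ i, q.1 i * q.2 i) ^ 2)
      ((A • LB + B • LA) - (C • LC + C • LC)) p := by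
    have h := (hA.fun_mul hB).fun_sub (hC.fun_mul hC)
    simpa only [← pow_two] using h
  have hv : HasFDerivAt (fun q : (Fin n → ℝ) × (Fin n → ℝ) => Real.sqrt
      ((1 + ∑ i, q.1 i ^ 2) * (1 + ∑ i, q.2 i ^ 2) - (∑ i, q.1 i * q.2 i) ^ 2)
        / (1 + ∑ i, q.1 i ^ 2))
      (s • ((-(A ^ 2)⁻¹) • LA)
        + A⁻¹ • ((1 / (2 * s)) • ((A • LB + B • LA) - (C • LC + C • LC)))) p := by
    simpa [div_eq_mul_inv] using (hD.sqrt hDne).fun_mul hAinv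
  have hucx := Complex.ofRealCLM.hasFDerivAt.comp p hu
  have hvcx := Complex.ofRealCLM.hasFDerivAt.comp p hv
  have hZ : HasFDerivAt (fun q : (Fin n → ℝ) × (Fin n → ℝ) =>
      (((∑ i, q.1 i * q.2 i) / (1 + ∑ i, q.1 i ^ 2) : ℝ) : ℂ)
        + ((Real.sqrt ((1 + ∑ i, q.1 i ^ 2) * (1 + ∑ i, q.2 i ^ 2)
              - (∑ i, q.1 i * q.2 i) ^ 2) / (1 + ∑ i, q.1 i ^ 2) : ℝ) : ℂ) * Complex.I)
      (Complex.ofRealCLM.comp (C • ((-(A ^ 2)⁻¹) • LA) + A⁻¹ • LC)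
        + Complex.I • Complex.ofRealCLM.comp (s • ((-(A ^ 2)⁻¹) • LA)
            + A⁻¹ • ((1 / (2 * s)) • ((A • LB + B • LA) - (C • LC + C • LC))))) p :=
    hucx.add (hvcx.mul_const Complex.I)
  rw [hZ.fderiv]
  simp only [ContinuousLinearMap.add_apply, ContinuousLinearMap.smul_apply,
    ContinuousLinearMap.comp_apply, ContinuousLinearMap.coe_sum', Finset.sum_apply,
    ContinuousLinearMap.sub_apply, ContinuousLinearMap.coe_fst', ContinuousLinearMap.coe_snd',
    ContinuousLinearMap.proj_apply, Complex.ofRealCLM_apply, hLC, hLA, hLB, hLX, hLY,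
    Pi.single_apply, smul_eq_mul, mul_ite, mul_zero, mul_one, Finset.sum_ite_eq',
    Finset.mem_univ, if_true]
  simp only [Pi.zero_apply, mul_zero, zero_add, add_zero, Finset.sum_add_distrib,
    Finset.sum_ite_eq', Finset.mem_univ, if_true, Finset.sum_const_zero]
  simp only [← hCdef, ← hAdef, ← hBdef, ← hDdef, ← hsdef]
  rw [Complex.ext_iff]
  simp only [Complex.add_re, Complex.add_im, Complex.mul_re, Complex.mul_im, Complex.I_re,
    Complex.I_im, Complex.ofReal_re, Complex.ofReal_im, Complex.zero_re, Complex.zero_im,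
    mul_zero, zero_mul, sub_zero, zero_sub, add_zero, zero_add, one_mul, mul_one, neg_zero]
  have hs2' : s ^ 2 = A * B - C ^ 2 := by rw [hs2]
  constructor
  · field_simp
    ring
  · field_simp
    linear_combination (-(2 * p.1 l)) * hs2'
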